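/- Let V ≤ 𝔽₂^u be a subspace, v ∈ 𝔽₂^u \ V, W := span(V ∪ {v}), S ⊆ 𝔽₂^u, b ≥ 0, and Φ(U) := E_{x uniform}[b^{|(x+U)∩S|}] for subspaces U. Then Φ(W) - 1 ≥ 2(Φ(V) - 1). -/

import Mathlib

/-- The potential function Φ(W) = E_{x uniform in 𝔽₂^u}[b^{|(x+W)∩S|}]. -/
noncomputable def potential (u : ℕ) (S : Set (Fin u → ZMod 2)) (b : ℝ)
    (W : Submodule (ZMod 2) (Fin u → ZMod 2)) : ℝ :=
  (∑ x : Fin u → ZMod 2, b ^ (({z | z - x ∈ W} ∩ S).ncard)) / 2 ^ u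

theorem stmt_5 (u : ℕ) (V : Submodule (ZMod 2) (Fin u → ZMod 2))
    (v : Fin u → ZMod 2) (hv : v ∉ V)
    (S : Set (Fin u → ZMod 2)) (b : ℝ) (hb : 0 ≤ b) :
    2 * (potential u S b V - 1) ≤
      potential u S b (Submodule.span (ZMod 2) ((V : Set (Fin u → ZMod 2)) ∪ {v})) - 1 := by
  set W := Submodule.span (ZMod 2) ((V : Set (Fin u → ZMod 2)) ∪ {v}) with hW
  have memW : ∀ w, w ∈ W ↔ w ∈ V ∨ w - v ∈ V := by
    intro w
    rw [hW, Submodule.span_union, Submodule.span_eq, Submodule.mem_sup]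
    constructor
    · rintro ⟨y, hy, z, hz, rfl⟩
      rw [Submodule.mem_span_singleton] at hz
      obtain ⟨c, rfl⟩ := hz
      have hc : c = 0 ∨ c = 1 := by revert c; decide
      rcases hc with rfl | rfl
      · left; simpa using hy
      · right; simpa using hy
    · rintro (h | h)
      · exact ⟨w, h, 0, Submodule.zero_mem _, by simp⟩
      · exact ⟨w - v, h, v, Submodule.mem_span_singleton_self _, by abel⟩
  set f : (Fin u → ZMod 2) → ℕ := fun x => ({z | z - x ∈ V} ∩ S).ncard with hf
  have hset : ∀ x, {z | z - x ∈ W} ∩ S =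
      ({z | z - x ∈ V} ∩ S) ∪ ({z | z - (x + v) ∈ V} ∩ S) := by
    intro x; ext z
    simp only [Set.mem_inter_iff, Set.mem_union, Set.mem_setOf_eq, memW, sub_add_eq_sub_sub]
    tauto
  have hcard : ∀ x, ({z | z - x ∈ W} ∩ S).ncard = f x + f (x + v) := by
    intro x
    rw [hset x]
    apply Set.ncard_union_eq _ (Set.toFinite _) (Set.toFinite _)
    rw [Set.disjoint_left]
    rintro z ⟨h1, -⟩ ⟨h2, -⟩
    have h3 : (z - x) - (z - (x + v)) ∈ V := V.sub_mem h1 h2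
    have h4 : (z - x) - (z - (x + v)) = v := by abel
    exact hv (h4 ▸ h3)
  have hpt : ∀ r s : ℕ, b ^ r + b ^ s - 1 ≤ b ^ (r + s) := by
    intro r s
    rw [pow_add]
    rcases le_total b 1 with h | h
    · nlinarith [pow_le_one₀ hb h (n := r), pow_le_one₀ hb h (n := s)]
    · nlinarith [one_le_pow₀ h (n := r), one_le_pow₀ h (n := s)]
  have hshift : ∑ x : Fin u → ZMod 2, b ^ (f (x + v)) = ∑ x : Fin u → ZMod 2, b ^ (f x) :=
    Equiv.sum_comp (Equiv.addRight v) (fun y => b ^ f y)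
  have hcardU : (Finset.univ : Finset (Fin u → ZMod 2)).card = 2 ^ u := by
    simp [Finset.card_univ]
  have key : 2 * (∑ x : Fin u → ZMod 2, b ^ (f x)) - 2 ^ u ≤
      ∑ x : Fin u → ZMod 2, b ^ (f x + f (x + v)) := by
    have h1 : ∑ x : Fin u → ZMod 2, (b ^ (f x) + b ^ (f (x + v)) - 1) ≤
        ∑ x : Fin u → ZMod 2, b ^ (f x + f (x + v)) :=
      Finset.sum_le_sum fun x _ => hpt _ _
    have h2 : ∑ x : Fin u → ZMod 2, (b ^ (f x) + b ^ (f (x + v)) - 1) =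
        2 * (∑ x : Fin u → ZMod 2, b ^ (f x)) - 2 ^ u := by
      rw [Finset.sum_sub_distrib, Finset.sum_add_distrib, hshift, Finset.sum_const, hcardU]
      ring
    linarith
  have h2pos : (0 : ℝ) < 2 ^ u := by positivity
  rw [potential, potential]
  simp only [hcard]
  set A := ∑ x : Fin u → ZMod 2, b ^ (f x) with hA
  calc 2 * (A / 2 ^ u - 1) = (2 * A - 2 ^ u * 2) / 2 ^ u := by field_simp
    _ ≤ ((∑ x : Fin u → ZMod 2, b ^ (f x + f (x + v))) - 2 ^ u) / 2 ^ u := by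
        exact div_le_div_of_nonneg_right (by linarith [key]) h2pos.le
    _ = (∑ x : Fin u → ZMod 2, b ^ (f x + f (x + v))) / 2 ^ u - 1 := by field_simp
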